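/- Let s ≥ 2 and a = (a_1, …, a_s) ∈ ℤ_{≥1}^s with a_1 > a_j for all 2 ≤ j ≤ s and gcd(a_1, a_2) = 1, and let d ≥ s. Let λ = (λ_0, …, λ_d) be a nonzero fundamental parallelepiped point of the multidiagonal simplex P(a;d) ⊆ ℝ^d, and let k be the largest index with λ_k ≠ 0. Then for every integer j with s−1 ≤ j ≤ k−1 such that the s consecutive coordinates λ_{k−j}, λ_{k−j+1}, …, λ_{k−j+s−1} are all nonzero, one has Σ_{i=0}^{s−1} λ_{k−j+i} > 1/a_1. -/

import Mathlib

open scoped BigOperators Pointwise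

/-- `lam` is a fundamental parallelepiped point for the simplex with vertices `v`:
`0 ≤ lam i < 1` for all `i` and `∑ i, lam i • (1, v i) ∈ ℤ^{n+1}`. -/
def IsFPP {N n : ℕ} (v : Fin N → Fin n → ℝ) (lam : Fin N → ℝ) : Prop :=
  (∀ i, 0 ≤ lam i ∧ lam i < 1) ∧
  (∃ z : ℤ, ∑ i, lam i = (z : ℝ)) ∧
  (∀ j, ∃ z : ℤ, ∑ i, lam i * v i j = (z : ℝ))

/-- Vertices of the multidiagonal simplex `P(a; d) ⊆ ℝ^d`:
`w_0 = 0` and `w_c = ∑_{i=1}^{min(s,c)} a_i e_{c+1-i}` for `1 ≤ c ≤ d`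
(coordinates are 0-indexed, so `e_t` is the indicator of index `t-1`). -/
def Wvert (s : ℕ) (a : Fin s → ℕ) (d : ℕ) : Fin (d + 1) → Fin d → ℝ := fun c p =>
  if h : (p : ℕ) < (c : ℕ) ∧ (c : ℕ) - (p : ℕ) ≤ s then
    (a ⟨(c : ℕ) - (p : ℕ) - 1, by omega⟩ : ℝ)
  else 0

/-- A sum over `Fin (d+1)` of a function supported on the block `[m, m+s)`
equals the sum over that block. -/
lemma sum_block {d s : ℕ} (m : ℕ) (h : m + s ≤ d + 1) (f : Fin (d+1) → ℝ)
    (hf : ∀ c : Fin (d+1), ((c : ℕ) < m ∨ m + s ≤ (c : ℕ)) → f c = 0) :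
    ∑ c, f c = ∑ i : Fin s, f ⟨m + (i : ℕ), by have := i.isLt; omega⟩ := by
  classical
  set E : Fin s → Fin (d+1) := fun i => ⟨m + (i : ℕ), by have := i.isLt; omega⟩ with hE
  have hinj : Function.Injective E := by
    intro x y hxy
    have : m + (x : ℕ) = m + (y : ℕ) := congrArg Fin.val hxy
    exact Fin.ext (by omega)
  have h1 : ∑ c ∈ Finset.univ.image E, f c = ∑ i : Fin s, f (E i) :=
    Finset.sum_image (fun x _ y _ hxy => hinj hxy)
  rw [← h1]
  symm
  apply Finset.sum_subset (Finset.subset_univ _)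
  intro c _ hc
  apply hf
  by_contra hcon
  push_neg at hcon
  exact hc (Finset.mem_image.2 ⟨⟨(c : ℕ) - m, by omega⟩, Finset.mem_univ _,
    Fin.ext (by simp [hE]; omega)⟩)

set_option maxHeartbeats 2000000 in
theorem stmt18 (s : ℕ) (hs : 2 ≤ s) (a : Fin s → ℕ)
    (hpos : ∀ i, 1 ≤ a i) (hmax : ∀ i : Fin s, i ≠ ⟨0, by omega⟩ → a i < a ⟨0, by omega⟩)
    (hgcd : Nat.gcd (a ⟨0, by omega⟩) (a ⟨1, by omega⟩) = 1)
    (d : ℕ) (hd : s ≤ d) (lam : Fin (d + 1) → ℝ)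
    (hlam : IsFPP (Wvert s a d) lam) (hne : lam ≠ 0)
    (k : Fin (d + 1)) (hk : lam k ≠ 0) (hkmax : ∀ c : Fin (d + 1), lam c ≠ 0 → c ≤ k)
    (j : ℕ) (hj1 : s - 1 ≤ j) (hj2 : j ≤ (k : ℕ) - 1)
    (hnz : ∀ i : Fin s,
      lam ⟨(k : ℕ) - j + (i : ℕ), by have := i.isLt; have := k.isLt; omega⟩ ≠ 0) :
    1 / (a ⟨0, by omega⟩ : ℝ) <
      ∑ i : Fin s,
        lam ⟨(k : ℕ) - j + (i : ℕ), by have := i.isLt; have := k.isLt; omega⟩ := by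
  obtain ⟨hbd, -, hcoord⟩ := hlam
  have hkd := k.isLt
  have hjk : j + 1 ≤ (k : ℕ) := by omega
  set m : ℕ := (k : ℕ) - j with hm
  have hm1 : 1 ≤ m := by omega
  have hms : m + s ≤ d + 1 := by omega
  set p : Fin d := ⟨m - 1, by omega⟩ with hp
  have hpv : (p : ℕ) = m - 1 := rfl
  obtain ⟨z, hz⟩ := hcoord p
  -- positivity of lam on the block
  have hpos' : ∀ i : Fin s, 0 < lam ⟨m + (i : ℕ), by have := i.isLt; omega⟩ := by
    intro i
    exact lt_of_le_of_ne (hbd _).1 (Ne.symm (hnz i))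
  -- the summand vanishes off the block
  have hvan : ∀ c : Fin (d+1), ((c : ℕ) < m ∨ m + s ≤ (c : ℕ)) →
      lam c * Wvert s a d c p = 0 := by
    intro c hc
    have hcond : ¬ (((p : ℕ) < (c : ℕ)) ∧ (c : ℕ) - (p : ℕ) ≤ s) := by
      rw [hpv]; omega
    show lam c * Wvert s a d c p = 0
    simp only [Wvert]
    rw [dif_neg hcond, mul_zero]
  have hblock := sum_block m hms (fun c => lam c * Wvert s a d c p) hvan
  -- evaluate Wvert on the block
  have hsum : ∑ c : Fin (d+1), lam c * Wvert s a d c p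
      = ∑ i : Fin s, lam ⟨m + (i : ℕ), by have := i.isLt; omega⟩ * (a i : ℝ) := by
    rw [hblock]
    apply Finset.sum_congr rfl
    intro i _
    congr 1
    have hi := i.isLt
    have hcond : ((p : ℕ) < m + (i : ℕ)) ∧ m + (i : ℕ) - (p : ℕ) ≤ s := by
      rw [hpv]; omega
    simp only [Wvert]
    rw [dif_pos hcond]
    congr 1
    have hidx : (⟨m + (i : ℕ) - (m - 1) - 1, by omega⟩ : Fin s) = i :=
      Fin.ext (show m + (i : ℕ) - (m - 1) - 1 = (i : ℕ) by omega)
    exact congrArg (fun t : Fin s => a t) hidx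
  rw [hsum] at hz
  have hSpos : (0 : ℝ) <
      ∑ i : Fin s, lam ⟨m + (i : ℕ), by have := i.isLt; omega⟩ * (a i : ℝ) := by
    apply Finset.sum_pos
    · intro i _
      have h1 := hpos' i
      have h2 := hpos i
      positivity
    · exact ⟨⟨0, by omega⟩, Finset.mem_univ _⟩
  have hz1 : (1 : ℝ) ≤
      ∑ i : Fin s, lam ⟨m + (i : ℕ), by have := i.isLt; omega⟩ * (a i : ℝ) := by
    rw [hz] at hSpos ⊢
    exact_mod_cast (by exact_mod_cast hSpos : (0:ℤ) < z)
  set a1 : ℕ := a ⟨0, by omega⟩ with ha1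
  have hlt : ∑ i : Fin s, lam ⟨m + (i : ℕ), by have := i.isLt; omega⟩ * (a i : ℝ)
      < ∑ i : Fin s, lam ⟨m + (i : ℕ), by have := i.isLt; omega⟩ * (a1 : ℝ) := by
    apply Finset.sum_lt_sum
    · intro i _
      apply mul_le_mul_of_nonneg_left _ (le_of_lt (hpos' i))
      by_cases hi : i = ⟨0, by omega⟩
      · subst hi; exact le_refl _
      · exact_mod_cast le_of_lt (hmax i hi)
    · refine ⟨⟨1, by omega⟩, Finset.mem_univ _, ?_⟩
      apply mul_lt_mul_of_pos_left _ (hpos' ⟨1, by omega⟩)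
      exact_mod_cast hmax ⟨1, by omega⟩ (by simp [Fin.ext_iff])
  have ha1pos : (0 : ℝ) < (a1 : ℝ) := by exact_mod_cast hpos ⟨0, by omega⟩
  rw [div_lt_iff₀ ha1pos]
  exact lt_of_le_of_lt hz1 (lt_of_lt_of_eq hlt (Finset.sum_mul _ _ _).symm)
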